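/- Under the setup of the fluid model with differentiable per-slot efficacy R(τ, p_0) and capacity-matching threshold τ_c(p_0) = 1 − (ρ − p_0)/Δ_P (with ρ ∈ (p_0, p_0 + Δ_P) fixed so that p_0 + Δ_P(1 − τ_c(p_0)) = ρ), the total derivative of R along the capacity-matching path equals d/dp_0 [R(τ_c(p_0), p_0)] = (μ − m(τ_c(p_0))) / ρ, where μ is the unconditional mean score and m(τ) = g(τ) − (1−τ)g'(τ) is the marginal conditional mean at the threshold quantile. In particular, if m(τ_c(p_0)) > μ, this derivative is negative. -/

import Mathlib

/-- Total derivative of per-slot efficacy along the capacity-matching path: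
with `τ_c(p) = 1 − (ρ − p)/ΔP` (so `p + ΔP(1 − τ_c(p)) = ρ`),
`d/dp0 [R(τ_c(p0), p0)] = (μ − m(τ_c(p0)))/ρ`; in particular it is negative when
`m(τ_c(p0)) > μ`. -/
theorem stmt_11 (p0 ΔP ρ μ : ℝ) (hp0 : 0 < p0) (hΔ : 0 < ΔP)
    (hρ : ρ ∈ Set.Ioo p0 (p0 + ΔP))
    (g : ℝ → ℝ) (hg : Differentiable ℝ g)
    (m : ℝ → ℝ) (hm : ∀ τ, m τ = g τ - (1 - τ) * deriv g τ)
    (τc : ℝ → ℝ) (hτc : ∀ p, τc p = 1 - (ρ - p) / ΔP)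
    (F : ℝ → ℝ)
    (hF : ∀ p, F p = (p * μ + ΔP * (1 - τc p) * g (τc p)) / (p + ΔP * (1 - τc p))) :
    deriv F p0 = (μ - m (τc p0)) / ρ ∧ (μ < m (τc p0) → deriv F p0 < 0) := by
  have hρ0 : 0 < ρ := hp0.trans hρ.1
  have hΔne : (ΔP : ℝ) ≠ 0 := ne_of_gt hΔ
  have hF' : F = fun p => (p * μ + (ρ - p) * g (1 - (ρ - p) / ΔP)) / ρ := by
    funext p
    rw [hF, hτc]
    have h1 : ΔP * (1 - (1 - (ρ - p) / ΔP)) = ρ - p := by field_simp; ring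
    rw [h1]
    ring_nf
  have hτ : HasDerivAt (fun p : ℝ => 1 - (ρ - p) / ΔP) (1 / ΔP) p0 := by
    have : HasDerivAt (fun p : ℝ => 1 - (ρ - p) / ΔP) (0 - (0 - 1) / ΔP) p0 := by
      exact (hasDerivAt_const p0 (1:ℝ)).sub
        (((hasDerivAt_const p0 ρ).sub (hasDerivAt_id p0)).div_const ΔP)
    convert this using 1
    ring
  set τ := 1 - (ρ - p0) / ΔP with hτdef
  have hgτ : HasDerivAt (fun p : ℝ => g (1 - (ρ - p) / ΔP)) (deriv g τ * (1 / ΔP)) p0 :=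
    (hg τ).hasDerivAt.comp p0 hτ
  have hmain : HasDerivAt F
      ((μ + ((0 - 1) * g τ + (ρ - p0) * (deriv g τ * (1 / ΔP)))) / ρ) p0 := by
    rw [hF']
    have h := (((hasDerivAt_id p0).mul_const μ).add
      ((((hasDerivAt_const p0 ρ).sub (hasDerivAt_id p0)).mul hgτ))).div_const ρ
    convert h using 1
    · rfl
    · rfl
    · simp
    · simp [hτdef]
  have hd : deriv F p0 = (μ + ((0 - 1) * g τ + (ρ - p0) * (deriv g τ * (1 / ΔP)))) / ρ :=
    hmain.deriv
  have hτc0 : τc p0 = τ := by rw [hτc]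
  have hval : deriv F p0 = (μ - m (τc p0)) / ρ := by
    rw [hd, hτc0, hm τ, hτdef]
    field_simp
    ring
  refine ⟨hval, fun hlt => ?_⟩
  rw [hval]
  exact div_neg_of_neg_of_pos (by linarith) hρ0
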